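/- Fix positive constants $L, V^d, \beta, V^c, R$. Define $\hat{D}(t, V) = \max\{\hat{D}_1(tR, V), \hat{D}_2(tR)\}$ where $\hat{D}_1(r,V) = \frac{L}{r}\frac{(r+V)(r+\beta V^d)}{V^d V(1+\beta) + r(V^d+V)}$ and $\hat{D}_2(r) = \frac{L}{r}\frac{r+\beta V^d}{V^d+r}$. Then $\hat{D}$ is a continuous convex function of $(t, V)$ on $(0,\infty)^2$, and $\hat{D}(t,V) = \hat{D}_1(tR,V)$ when $(tR)^2 \ge \beta V^d V$ while $\hat{D}(t,V) = \hat{D}_2(tR)$ when $(tR)^2 < \beta V^d V$. -/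

import Mathlib

lemma combo_pos (r1 r2 a b : ℝ) (h1 : 0 < r1) (h2 : 0 < r2)
    (ha : 0 ≤ a) (hb : 0 ≤ b) (hab : a + b = 1) : 0 < a * r1 + b * r2 := by
  rcases eq_or_lt_of_le ha with h | h
  · have hb1 : b = 1 := by linarith
    rw [← h, hb1]; simpa using h2
  · exact add_pos_of_pos_of_nonneg (mul_pos h h1) (mul_nonneg hb h2.le)

lemma inv_lemma (c A B a b : ℝ) (hc : 0 ≤ c) (hA : 0 < A) (hB : 0 < B)
    (ha : 0 ≤ a) (hb : 0 ≤ b) (hab : a + b = 1) :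
    c / (a * A + b * B) ≤ a * (c / A) + b * (c / B) := by
  have hb' : b = 1 - a := by linarith
  subst hb'
  have hm : 0 < a * A + (1 - a) * B := combo_pos A B a (1 - a) hA hB ha hb (by ring)
  rw [mul_div_assoc', mul_div_assoc', div_add_div _ _ hA.ne' hB.ne',
    div_le_div_iff₀ hm (mul_pos hA hB)]
  nlinarith [mul_nonneg (mul_nonneg ha hb) (mul_nonneg hc (sq_nonneg (A - B)))]

lemma conc1 (c d r1 r2 a b : ℝ) (hc : 0 < c) (hd : 0 < d) (h1 : 0 < r1) (h2 : 0 < r2)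
    (ha : 0 ≤ a) (hb : 0 ≤ b) (hab : a + b = 1) :
    a * (r1 * c / (r1 + d)) + b * (r2 * c / (r2 + d)) ≤
      (a * r1 + b * r2) * c / ((a * r1 + b * r2) + d) := by
  have hb' : b = 1 - a := by linarith
  subst hb'
  have hm : 0 < a * r1 + (1 - a) * r2 := combo_pos r1 r2 a (1 - a) h1 h2 ha hb (by ring)
  have hd1 : 0 < r1 + d := by linarith
  have hd2 : 0 < r2 + d := by linarith
  have hdm : 0 < (a * r1 + (1 - a) * r2) + d := by linarith
  rw [mul_div_assoc', mul_div_assoc', div_add_div _ _ hd1.ne' hd2.ne',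
    div_le_div_iff₀ (mul_pos hd1 hd2) hdm]
  nlinarith [mul_nonneg (mul_nonneg (mul_nonneg ha hb) (mul_nonneg hc.le hd.le)) (sq_nonneg (r1 - r2))]

lemma harm (r1 V1 r2 V2 a b : ℝ) (h1 : 0 < r1) (hV1 : 0 < V1) (h2 : 0 < r2) (hV2 : 0 < V2)
    (ha : 0 ≤ a) (hb : 0 ≤ b) (hab : a + b = 1) :
    a * (r1 * V1 / (r1 + V1)) + b * (r2 * V2 / (r2 + V2)) ≤
      (a * r1 + b * r2) * (a * V1 + b * V2) / ((a * r1 + b * r2) + (a * V1 + b * V2)) := by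
  have hb' : b = 1 - a := by linarith
  subst hb'
  have hm1 : 0 < a * r1 + (1 - a) * r2 := combo_pos r1 r2 a (1 - a) h1 h2 ha hb (by ring)
  have hm2 : 0 < a * V1 + (1 - a) * V2 := combo_pos V1 V2 a (1 - a) hV1 hV2 ha hb (by ring)
  have hd1 : 0 < r1 + V1 := by linarith
  have hd2 : 0 < r2 + V2 := by linarith
  have hdm : 0 < (a * r1 + (1 - a) * r2) + (a * V1 + (1 - a) * V2) := by linarith
  rw [mul_div_assoc', mul_div_assoc', div_add_div _ _ hd1.ne' hd2.ne',
    div_le_div_iff₀ (mul_pos hd1 hd2) hdm]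
  nlinarith [mul_nonneg (mul_nonneg ha hb) (sq_nonneg (r1 * V2 - r2 * V1))]

lemma affine_inv_convex (c d e : ℝ) (hc : 0 ≤ c) (hpos : ∀ t : ℝ, 0 < t → 0 < d + e * t) :
    ConvexOn ℝ (Set.Ioi 0 ×ˢ Set.Ioi 0) (fun p : ℝ × ℝ => c / (d + e * p.1)) := by
  refine ⟨(convex_Ioi 0).prod (convex_Ioi 0), ?_⟩
  intro x hx y hy a b ha hb hab
  simp only [Set.mem_prod, Set.mem_Ioi] at hx hy
  simp only [Prod.fst_add, Prod.smul_fst, smul_eq_mul]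
  have e1 : d + e * (a * x.1 + b * y.1) = a * (d + e * x.1) + b * (d + e * y.1) := by
    linear_combination (-d) * hab
  rw [e1]
  exact inv_lemma c _ _ a b hc (hpos _ hx.1) (hpos _ hy.1) ha hb hab

theorem Dhat_convex_and_branches
    (L Vd Vc R β : ℝ)
    (hL : 0 < L) (hVd : 0 < Vd) (hVc : 0 < Vc) (hR : 0 < R)
    (hβ0 : 0 < β) (hβ1 : β < 1)
    (D1 : ℝ → ℝ → ℝ) (D2 : ℝ → ℝ) (Dhat : ℝ × ℝ → ℝ)
    (hD1 : ∀ r V, D1 r V = L / r * ((r + V) * (r + β * Vd) /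
      (Vd * V * (1 + β) + r * (Vd + V))))
    (hD2 : ∀ r, D2 r = L / r * ((r + β * Vd) / (Vd + r)))
    (hDhat : ∀ p : ℝ × ℝ, Dhat p = max (D1 (p.1 * R) p.2) (D2 (p.1 * R))) :
    ContinuousOn Dhat (Set.Ioi 0 ×ˢ Set.Ioi 0) ∧
    ConvexOn ℝ (Set.Ioi 0 ×ˢ Set.Ioi 0) Dhat ∧
    (∀ t V : ℝ, 0 < t → 0 < V → β * Vd * V ≤ (t * R) ^ 2 →
      Dhat (t, V) = D1 (t * R) V) ∧
    (∀ t V : ℝ, 0 < t → 0 < V → (t * R) ^ 2 < β * Vd * V →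
      Dhat (t, V) = D2 (t * R)) := by
  have hS : Convex ℝ (Set.Ioi (0:ℝ) ×ˢ Set.Ioi (0:ℝ)) := (convex_Ioi 0).prod (convex_Ioi 0)
  set g : ℝ × ℝ → ℝ :=
    fun p => (p.1 * R) * Vd / (p.1 * R + β * Vd) + (p.1 * R) * p.2 / (p.1 * R + p.2) with hg
  have hgpos : ∀ p ∈ Set.Ioi (0:ℝ) ×ˢ Set.Ioi (0:ℝ), 0 < g p := by
    rintro ⟨t, V⟩ hp
    simp only [Set.mem_prod, Set.mem_Ioi] at hp
    have hr : 0 < t * R := mul_pos hp.1 hR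
    have h1 : 0 < t * R + β * Vd := add_pos hr (mul_pos hβ0 hVd)
    have h2 : 0 < t * R + V := add_pos hr hp.2
    exact add_pos (div_pos (mul_pos hr hVd) h1) (div_pos (mul_pos hr hp.2) h2)
  have hgconc : ConcaveOn ℝ (Set.Ioi (0:ℝ) ×ˢ Set.Ioi (0:ℝ)) g := by
    apply ConcaveOn.add
    · refine ⟨hS, ?_⟩
      intro x hx y hy a b ha hb hab
      simp only [Set.mem_prod, Set.mem_Ioi] at hx hy
      simp only [Prod.fst_add, Prod.smul_fst, smul_eq_mul]
      rw [show (a * x.1 + b * y.1) * R = a * (x.1 * R) + b * (y.1 * R) from by ring]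
      exact conc1 Vd (β * Vd) (x.1 * R) (y.1 * R) a b hVd (mul_pos hβ0 hVd)
        (mul_pos hx.1 hR) (mul_pos hy.1 hR) ha hb hab
    · refine ⟨hS, ?_⟩
      intro x hx y hy a b ha hb hab
      simp only [Set.mem_prod, Set.mem_Ioi] at hx hy
      simp only [Prod.fst_add, Prod.snd_add, Prod.smul_fst, Prod.smul_snd, smul_eq_mul]
      rw [show (a * x.1 + b * y.1) * R = a * (x.1 * R) + b * (y.1 * R) from by ring]
      exact harm (x.1 * R) x.2 (y.1 * R) y.2 a b (mul_pos hx.1 hR) hx.2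
        (mul_pos hy.1 hR) hy.2 ha hb hab
  have hD1conv : ConvexOn ℝ (Set.Ioi (0:ℝ) ×ˢ Set.Ioi (0:ℝ)) (fun p : ℝ × ℝ => D1 (p.1 * R) p.2) := by
    have base : ConvexOn ℝ (Set.Ioi (0:ℝ) ×ˢ Set.Ioi (0:ℝ)) (fun p => L / g p) := by
      refine ⟨hS, ?_⟩
      intro x hx y hy a b ha hb hab
      have hgx := hgpos x hx
      have hgy := hgpos y hy
      have hmid := hgconc.2 hx hy ha hb hab
      simp only [smul_eq_mul] at hmid ⊢
      have hmpos : 0 < a * g x + b * g y := combo_pos _ _ a b hgx hgy ha hb hab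
      calc L / g (a • x + b • y) ≤ L / (a * g x + b * g y) := by
            apply div_le_div_of_nonneg_left hL.le hmpos hmid
        _ ≤ a * (L / g x) + b * (L / g y) := inv_lemma L _ _ a b hL.le hgx hgy ha hb hab
    apply base.congr
    rintro ⟨t, V⟩ hp
    simp only [Set.mem_prod, Set.mem_Ioi] at hp
    have hr : 0 < t * R := mul_pos hp.1 hR
    have h1 : 0 < t * R + β * Vd := add_pos hr (mul_pos hβ0 hVd)
    have h2 : 0 < t * R + V := add_pos hr hp.2
    have hW : 0 < Vd * V * (1 + β) + (t * R) * (Vd + V) := by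
      have := mul_pos (mul_pos hVd hp.2) (by linarith : (0:ℝ) < 1 + β)
      have := mul_pos hr (add_pos hVd hp.2)
      linarith
    show L / g (t, V) = D1 (t * R) V
    have hgval : g (t, V) = (t * R) * (Vd * V * (1 + β) + (t * R) * (Vd + V)) /
        ((t * R + β * Vd) * (t * R + V)) := by
      rw [hg]; field_simp; ring
    rw [hgval, hD1, div_div_eq_mul_div]
    field_simp
  have hD2conv : ConvexOn ℝ (Set.Ioi (0:ℝ) ×ˢ Set.Ioi (0:ℝ)) (fun p : ℝ × ℝ => D2 (p.1 * R)) := by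
    have base := (affine_inv_convex (L * β) 0 R (by positivity)
        (fun t ht => by simpa using mul_pos hR ht)).add
      (affine_inv_convex (L * (1 - β)) Vd R (by nlinarith)
        (fun t ht => by positivity))
    apply base.congr
    rintro ⟨t, V⟩ hp
    simp only [Set.mem_prod, Set.mem_Ioi] at hp
    have hr : 0 < t * R := mul_pos hp.1 hR
    have h1 : 0 < Vd + t * R := add_pos hVd hr
    show L * β / (0 + R * t) + L * (1 - β) / (Vd + R * t) = D2 (t * R)
    rw [hD2]
    rw [zero_add]
    rw [show R * t = t * R from by ring]
    field_simp [hp.1.ne']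
    ring
  have hDconv : ConvexOn ℝ (Set.Ioi (0:ℝ) ×ˢ Set.Ioi (0:ℝ)) Dhat := by
    apply (hD1conv.sup hD2conv).congr
    intro p hp
    simp only [Pi.sup_apply, hDhat p]
  refine ⟨hDconv.continuousOn (isOpen_Ioi.prod isOpen_Ioi), hDconv, ?_, ?_⟩
  · intro t V ht hV hcase
    have hr : 0 < t * R := mul_pos ht hR
    have h1 : 0 < t * R + β * Vd := add_pos hr (mul_pos hβ0 hVd)
    have h2 : 0 < Vd + t * R := add_pos hVd hr
    have hW : 0 < Vd * V * (1 + β) + (t * R) * (Vd + V) := by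
      have := mul_pos (mul_pos hVd hV) (by linarith : (0:ℝ) < 1 + β)
      have := mul_pos hr (add_pos hVd hV)
      linarith
    rw [hDhat]
    simp only
    apply max_eq_left
    rw [hD1, hD2]
    apply mul_le_mul_of_nonneg_left _ (by positivity : (0:ℝ) ≤ L / (t * R))
    rw [div_le_div_iff₀ h2 hW]
    nlinarith [mul_nonneg h1.le (sub_nonneg.2 hcase)]
  · intro t V ht hV hcase
    have hr : 0 < t * R := mul_pos ht hR
    have h1 : 0 < t * R + β * Vd := add_pos hr (mul_pos hβ0 hVd)
    have h2 : 0 < Vd + t * R := add_pos hVd hr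
    have hW : 0 < Vd * V * (1 + β) + (t * R) * (Vd + V) := by
      have := mul_pos (mul_pos hVd hV) (by linarith : (0:ℝ) < 1 + β)
      have := mul_pos hr (add_pos hVd hV)
      linarith
    rw [hDhat]
    simp only
    apply max_eq_right
    rw [hD1, hD2]
    apply mul_le_mul_of_nonneg_left _ (by positivity : (0:ℝ) ≤ L / (t * R))
    rw [div_le_div_iff₀ hW h2]
    nlinarith [mul_pos h1 (sub_pos.2 hcase)]
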